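/- arXiv:1409.2667 — 6 statements merged into one kernel-verified Lean document; each statement's English description precedes it below -/
import Mathlib

section
/- Let 0 < a < 2 and let f : ℕ × ℕ → ℂ be the discrete Z^a. Then for every n ≥ 1 the value f(n,0) is a positive real number, and for every m ≥ 1 there exists a positive real number t such that f(0,m) = exp(iaπ/2)·t. -/
/-- `f : ℕ × ℕ → ℂ` is the discrete `Z^a`: it satisfies the cross-ratio equation
(with all four differences around each unit square nonzero), the nonautonomous
constraint (interior version for `n, m ≥ 1`, boundary versions with the `2n`-term
omitted when `n = 0` and the `2m`-term omitted when `m = 0`), and the initial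
conditions `f(0,0) = 0`, `f(1,0) = 1`, `f(0,1) = exp(iaπ/2)`. -/
def IsDiscreteZa (a : ℝ) (f : ℕ × ℕ → ℂ) : Prop :=
  (∀ n m : ℕ,
    f (n + 1, m) - f (n, m) ≠ 0 ∧ f (n, m + 1) - f (n, m) ≠ 0 ∧
    f (n + 1, m + 1) - f (n + 1, m) ≠ 0 ∧ f (n + 1, m + 1) - f (n, m + 1) ≠ 0 ∧
    (f (n, m) - f (n + 1, m)) * (f (n + 1, m + 1) - f (n, m + 1)) =
      -((f (n + 1, m) - f (n + 1, m + 1)) * (f (n, m + 1) - f (n, m)))) ∧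
  (∀ n m : ℕ,
    f (n + 2, m + 1) ≠ f (n, m + 1) ∧ f (n + 1, m + 2) ≠ f (n + 1, m) ∧
    (a : ℂ) * f (n + 1, m + 1) =
      (2 * (n + 1) : ℂ) *
          ((f (n + 2, m + 1) - f (n + 1, m + 1)) * (f (n + 1, m + 1) - f (n, m + 1))) /
          (f (n + 2, m + 1) - f (n, m + 1)) +
        (2 * (m + 1) : ℂ) *
          ((f (n + 1, m + 2) - f (n + 1, m + 1)) * (f (n + 1, m + 1) - f (n + 1, m))) /
          (f (n + 1, m + 2) - f (n + 1, m))) ∧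
  (∀ n : ℕ,
    f (n + 2, 0) ≠ f (n, 0) ∧
    (a : ℂ) * f (n + 1, 0) =
      (2 * (n + 1) : ℂ) * ((f (n + 2, 0) - f (n + 1, 0)) * (f (n + 1, 0) - f (n, 0))) /
        (f (n + 2, 0) - f (n, 0))) ∧
  (∀ m : ℕ,
    f (0, m + 2) ≠ f (0, m) ∧
    (a : ℂ) * f (0, m + 1) =
      (2 * (m + 1) : ℂ) * ((f (0, m + 2) - f (0, m + 1)) * (f (0, m + 1) - f (0, m))) /
        (f (0, m + 2) - f (0, m))) ∧
  (a : ℂ) * f (0, 0) = 0 ∧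
  f (0, 0) = 0 ∧ f (1, 0) = 1 ∧
  f (0, 1) = Complex.exp (Complex.I * (a : ℂ) * (Real.pi : ℂ) / 2)

lemma axis_pos (a : ℝ) (ha : 0 < a) (ha2 : a < 2) (x : ℕ → ℂ)
    (h0 : x 0 = 0) (h1 : x 1 = 1)
    (hne : ∀ n : ℕ, x (n + 2) ≠ x n)
    (hrec : ∀ n : ℕ, (a : ℂ) * x (n + 1) =
      (2 * (n + 1) : ℂ) * ((x (n + 2) - x (n + 1)) * (x (n + 1) - x n)) / (x (n + 2) - x n)) :
    ∀ n : ℕ, ∃ s t : ℝ, x n = (s : ℂ) ∧ x (n + 1) = (t : ℂ) ∧ 0 ≤ s ∧ s < t ∧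
      a * t < 2 * ((n : ℝ) + 1) * (t - s) := by
  intro n
  induction n with
  | zero =>
    exact ⟨0, 1, by simpa using h0, by simpa using h1, le_refl 0, one_pos, by norm_num; linarith⟩
  | succ n ih =>
    obtain ⟨s, t, hs, ht, hs0, hst, hk⟩ := ih
    set D : ℝ := 2 * ((n : ℝ) + 1) * (t - s) with hD
    have ht0 : 0 < t := lt_of_le_of_lt hs0 hst
    have hden : 0 < D - a * t := by linarith
    have hdne : ((D : ℂ) - (a : ℂ) * (t : ℂ)) ≠ 0 := by
      exact_mod_cast ne_of_gt hden
    have h := hrec n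
    rw [eq_div_iff (sub_ne_zero.mpr (hne n))] at h
    rw [hs, ht] at h
    have key : x (n + 2) * ((D - a * t : ℝ) : ℂ) = ((t * (D - a * s) : ℝ) : ℂ) := by
      push_cast [hD]
      push_cast [hD] at h
      linear_combination -h
    set t' : ℝ := t * (D - a * s) / (D - a * t) with ht'
    have hz : x (n + 2) = (t' : ℂ) := by
      rw [ht']
      push_cast
      rw [eq_div_iff hdne]
      push_cast at key
      linear_combination key
    have hfact : t' * (D - a * t) = t * (D - a * s) := by
      rw [ht']; exact div_mul_cancel₀ _ hden.ne'
    have htt' : t < t' := by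
      rw [ht', lt_div_iff₀ hden]
      nlinarith [mul_pos ht0 (mul_pos ha (sub_pos.mpr hst))]
    refine ⟨t, t', ht, hz, le_of_lt ht0, htt', ?_⟩
    rw [← mul_lt_mul_iff_of_pos_right hden]
    have e1 : a * t' * (D - a * t) = a * (t * (D - a * s)) := by
      rw [← hfact]; ring
    have e2 : 2 * ((n : ℝ) + 1 + 1) * (t' - t) * (D - a * t) =
        2 * ((n : ℝ) + 1 + 1) * (t * (D - a * s) - t * (D - a * t)) := by
      rw [← hfact]; ring
    push_cast
    rw [e1, e2, hD]
    nlinarith [mul_pos (mul_pos ha ht0) (sub_pos.mpr hst),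
      mul_nonneg (mul_nonneg (mul_nonneg ha.le ha.le) ht0.le) hs0,
      mul_nonneg (Nat.cast_nonneg n : (0:ℝ) ≤ (n:ℝ)) (mul_pos (mul_pos ha ht0) (sub_pos.mpr hst)).le]

/-- The discrete `Z^a` maps the boundary axes into the rays `ℝ₊` and `e^{iaπ/2}ℝ₊`:
`Z^a(n,0)` is a positive real for `n ≥ 1`, and `Z^a(0,m) = e^{iaπ/2} t` with `t > 0`
for `m ≥ 1`. -/
theorem discrete_Za_boundary (a : ℝ) (ha : 0 < a) (ha2 : a < 2)
    (f : ℕ × ℕ → ℂ) (hf : IsDiscreteZa a f) :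
    (∀ n : ℕ, 1 ≤ n → ∃ t : ℝ, 0 < t ∧ f (n, 0) = (t : ℂ)) ∧
    (∀ m : ℕ, 1 ≤ m → ∃ t : ℝ, 0 < t ∧
      f (0, m) = Complex.exp (Complex.I * (a : ℂ) * (Real.pi : ℂ) / 2) * (t : ℂ)) := by

  obtain ⟨hcr, hint, hn0, h0m, -, hf00, hf10, hf01⟩ := hf
  constructor
  · have H := axis_pos a ha ha2 (fun n => f (n, 0)) hf00 hf10
      (fun n => (hn0 n).1) (fun n => (hn0 n).2)
    rintro ⟨⟩ hn
    · omega
    · rename_i n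
      obtain ⟨s, t, -, ht, hs0, hst, -⟩ := H n
      exact ⟨t, lt_of_le_of_lt hs0 hst, ht⟩
  · set c : ℂ := Complex.exp (Complex.I * (a : ℂ) * (Real.pi : ℂ) / 2) with hc
    have hcne : c ≠ 0 := Complex.exp_ne_zero _
    set x : ℕ → ℂ := fun m => f (0, m) / c with hx
    have hxne : ∀ m : ℕ, x (m + 2) ≠ x m := by
      intro m h
      apply (h0m m).1
      have : f (0, m + 2) = x (m + 2) * c := by rw [hx]; field_simp
      rw [this, h, hx]; field_simp
    have hxrec : ∀ m : ℕ, (a : ℂ) * x (m + 1) =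
        (2 * (m + 1) : ℂ) * ((x (m + 2) - x (m + 1)) * (x (m + 1) - x m)) / (x (m + 2) - x m) := by
      intro m
      have hg := (h0m m).2
      rw [eq_div_iff (sub_ne_zero.mpr (h0m m).1)] at hg
      rw [eq_div_iff (sub_ne_zero.mpr (hxne m))]
      simp only [hx]
      linear_combination hg / c ^ 2
    have H := axis_pos a ha ha2 x
      (by show f (0, 0) / c = 0; rw [hf00, zero_div])
      (by show f (0, 1) / c = 1; rw [hf01]; exact div_self hcne)
      hxne hxrec
    rintro ⟨⟩ hm
    · omega
    · rename_i m
      obtain ⟨s, t, -, ht, hs0, hst, -⟩ := H m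
      refine ⟨t, lt_of_le_of_lt hs0 hst, ?_⟩
      have : f (0, m + 1) = x (m + 1) * c := by rw [hx]; field_simp
      rw [this, ht]; ring
end

section
/- Let w, x, y, z ∈ ℂ be such that x − w, y − z, z − w, y − x are all nonzero. Then the cross-ratio condition (w − x)·(y − z) = −(x − y)·(z − w) holds if and only if for all λ ∈ ℂ one has the 2×2 matrix identity U(λ; y − z)·V(λ; z − w) = V(λ; y − x)·U(λ; x − w). (Here w, x, y, z play the roles of f(n,m), f(n+1,m), f(n+1,m+1), f(n,m+1), so this says that the cross-ratio equation is exactly the compatibility condition U_{n,m+1}(λ)V_{n,m}(λ) = V_{n+1,m}(λ)U_{n,m}(λ) of the Lax pair.) -/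
/-- The Lax matrix `U(λ; u) = [[1, -u], [λ/u, 1]]`. -/
noncomputable def LaxU (l u : ℂ) : Matrix (Fin 2) (Fin 2) ℂ := !![1, -u; l / u, 1]

/-- The Lax matrix `V(λ; v) = [[1, -v], [-λ/v, 1]]`. -/
noncomputable def LaxV (l v : ℂ) : Matrix (Fin 2) (Fin 2) ℂ := !![1, -v; -(l / v), 1]

/-- The cross-ratio equation `(w-x)(y-z) = -(x-y)(z-w)` holds iff the Lax compatibility
condition `U(λ; y-z) V(λ; z-w) = V(λ; y-x) U(λ; x-w)` holds for all `λ`.  Here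
`w, x, y, z` play the roles of `f_{n,m}, f_{n+1,m}, f_{n+1,m+1}, f_{n,m+1}`. -/
theorem crossRatio_iff_lax_compatibility (w x y z : ℂ)
    (h1 : x - w ≠ 0) (h2 : y - z ≠ 0) (h3 : z - w ≠ 0) (h4 : y - x ≠ 0) :
    ((w - x) * (y - z) = -((x - y) * (z - w))) ↔
    (∀ l : ℂ, LaxU l (y - z) * LaxV l (z - w) = LaxV l (y - x) * LaxU l (x - w)) := by
  constructor
  · intro h l
    ext i j
    fin_cases i <;> fin_cases j <;>
      simp [LaxU, LaxV, Matrix.mul_apply, Fin.sum_univ_two] <;>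
      field_simp <;>
      first
        | linear_combination l * h
        | linear_combination (-l) * h
        | linear_combination (l * ((z - w) - (y - x))) * h
        | linear_combination (-(l * ((z - w) - (y - x)))) * h
  · intro h
    have := congrFun (congrFun (h 1) 0) 0
    simp [LaxU, LaxV, Matrix.mul_apply, Fin.sum_univ_two] at this
    field_simp at this
    linear_combination -this
end

section
/- Let n, m ≥ 0 with n + m ≥ 1, and let u_0, …, u_{n−1}, v_0, …, v_{m−1} be nonzero complex numbers. Let P(λ) = U(λ; u_{n−1})···U(λ; u_0)·V(λ; v_{m−1})···V(λ; v_0), so that each entry of P is a polynomial in λ. If n + m = 2k is even, then deg P₁₁ ≤ k, deg P₂₁ ≤ k, deg P₂₂ ≤ k, deg P₁₂ ≤ k − 1, and the coefficients of λ^k in P₁₁ and in P₂₂ satisfy (coeff of λ^k in P₁₁)·(coeff of λ^k in P₂₂) = (−1)^m; in particular both are nonzero. If n + m = 2k + 1 is odd, then deg P₁₁ ≤ k, deg P₁₂ ≤ k, deg P₂₂ ≤ k, deg P₂₁ ≤ k + 1, and (coeff of λ^k in P₁₂)·(coeff of λ^{k+1} in P₂₁) = (−1)^{m+1}; in particular both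 are nonzero. (This is the degree and leading-coefficient structure of the wave function Ψ_{n,m}(λ)·λ^{(a/4)σ₃} at λ = ∞.) -/
open Polynomial

/-- The Lax matrix `U(λ; u) = [[1, -u], [λ/u, 1]]` with polynomial entries in `λ`. -/
noncomputable def UPoly (u : ℂ) : Matrix (Fin 2) (Fin 2) (Polynomial ℂ) :=
  !![1, C (-u); C u⁻¹ * X, 1]

/-- The Lax matrix `V(λ; v) = [[1, -v], [-λ/v, 1]]` with polynomial entries in `λ`. -/
noncomputable def VPoly (v : ℂ) : Matrix (Fin 2) (Fin 2) (Polynomial ℂ) :=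
  !![1, C (-v); C (-v⁻¹) * X, 1]

/-- The product `U(λ; u_{n-1}) ⋯ U(λ; u_0)`. -/
noncomputable def UProdPoly (u : ℕ → ℂ) : ℕ → Matrix (Fin 2) (Fin 2) (Polynomial ℂ)
  | 0 => 1
  | n + 1 => UPoly (u n) * UProdPoly u n

/-- The product `V(λ; v_{m-1}) ⋯ V(λ; v_0)`. -/
noncomputable def VProdPoly (v : ℕ → ℂ) : ℕ → Matrix (Fin 2) (Fin 2) (Polynomial ℂ)
  | 0 => 1
  | m + 1 => VPoly (v m) * VProdPoly v m

namespace LaxAux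

/-- invariant for even total length -/
def EInv (M : Matrix (Fin 2) (Fin 2) (Polynomial ℂ)) (s : ℂ) (k : ℕ) : Prop :=
  (M 0 0).degree ≤ (k : ℕ) ∧ (M 1 0).degree ≤ (k : ℕ) ∧ (M 1 1).degree ≤ (k : ℕ) ∧
  (M 0 1).degree < (k : ℕ) ∧ (M 0 0).coeff k * (M 1 1).coeff k = s

/-- invariant for odd total length -/
def OInv (M : Matrix (Fin 2) (Fin 2) (Polynomial ℂ)) (s : ℂ) (k : ℕ) : Prop :=
  (M 0 0).degree ≤ (k : ℕ) ∧ (M 0 1).degree ≤ (k : ℕ) ∧ (M 1 1).degree ≤ (k : ℕ) ∧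
  (M 1 0).degree ≤ ((k + 1 : ℕ) : WithBot ℕ) ∧
  (M 0 1).coeff k * (M 1 0).coeff (k + 1) = s

lemma entry00 (e₁ e₂ : ℂ) (M : Matrix (Fin 2) (Fin 2) (Polynomial ℂ)) :
    ((!![1, C e₁; C e₂ * X, 1] : Matrix (Fin 2) (Fin 2) (Polynomial ℂ)) * M) 0 0
      = M 0 0 + C e₁ * M 1 0 := by
  simp [Matrix.mul_apply, Fin.sum_univ_two]

lemma entry01 (e₁ e₂ : ℂ) (M : Matrix (Fin 2) (Fin 2) (Polynomial ℂ)) :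
    ((!![1, C e₁; C e₂ * X, 1] : Matrix (Fin 2) (Fin 2) (Polynomial ℂ)) * M) 0 1
      = M 0 1 + C e₁ * M 1 1 := by
  simp [Matrix.mul_apply, Fin.sum_univ_two]

lemma entry10 (e₁ e₂ : ℂ) (M : Matrix (Fin 2) (Fin 2) (Polynomial ℂ)) :
    ((!![1, C e₁; C e₂ * X, 1] : Matrix (Fin 2) (Fin 2) (Polynomial ℂ)) * M) 1 0
      = C e₂ * X * M 0 0 + M 1 0 := by
  simp [Matrix.mul_apply, Fin.sum_univ_two]

lemma entry11 (e₁ e₂ : ℂ) (M : Matrix (Fin 2) (Fin 2) (Polynomial ℂ)) :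
    ((!![1, C e₁; C e₂ * X, 1] : Matrix (Fin 2) (Fin 2) (Polynomial ℂ)) * M) 1 1
      = C e₂ * X * M 0 1 + M 1 1 := by
  simp [Matrix.mul_apply, Fin.sum_univ_two]

lemma deg_C_mul_le (c : ℂ) (p : Polynomial ℂ) : (C c * p).degree ≤ p.degree := by
  calc (C c * p).degree ≤ (C c).degree + p.degree := degree_mul_le _ _
    _ ≤ 0 + p.degree := add_le_add degree_C_le le_rfl
    _ = p.degree := zero_add _

lemma deg_add_C_mul {p q : Polynomial ℂ} {c : ℂ} {d : WithBot ℕ}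
    (hp : p.degree ≤ d) (hq : q.degree ≤ d) : (p + C c * q).degree ≤ d :=
  (degree_add_le _ _).trans (max_le hp ((deg_C_mul_le c q).trans hq))

lemma deg_CX_mul_le (c : ℂ) (p : Polynomial ℂ) {k : ℕ} (hp : p.degree ≤ (k : ℕ)) :
    (C c * X * p).degree ≤ ((k + 1 : ℕ) : WithBot ℕ) := by
  calc (C c * X * p).degree ≤ (C c * X).degree + p.degree := degree_mul_le _ _
    _ ≤ 1 + (k : WithBot ℕ) := by
        refine add_le_add ((deg_C_mul_le c X).trans ?_) hp
        exact degree_X_le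
    _ = ((k + 1 : ℕ) : WithBot ℕ) := by push_cast; ring

lemma deg_shift {p q : Polynomial ℂ} {c : ℂ} {k : ℕ}
    (hp : p.degree ≤ (k : ℕ)) (hq : q.degree ≤ ((k + 1 : ℕ) : WithBot ℕ)) :
    (C c * X * p + q).degree ≤ ((k + 1 : ℕ) : WithBot ℕ) :=
  (degree_add_le _ _).trans (max_le (deg_CX_mul_le c p hp) hq)

lemma lt_cast_succ {p : Polynomial ℂ} {k : ℕ} (hp : p.degree ≤ (k : ℕ)) :
    p.degree < ((k + 1 : ℕ) : WithBot ℕ) :=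
  lt_of_le_of_lt hp (by exact_mod_cast Nat.lt_succ_self k)

lemma deg_shift' {p q : Polynomial ℂ} {c : ℂ} {k : ℕ}
    (hp : p.degree < (k : ℕ)) (hq : q.degree ≤ (k : ℕ)) :
    (C c * X * p + q).degree ≤ ((k : ℕ) : WithBot ℕ) := by
  refine (degree_add_le _ _).trans (max_le ?_ hq)
  rw [degree_le_iff_coeff_zero]
  intro i hi
  rw [mul_assoc, coeff_C_mul]
  rcases i with _ | i
  · simp at hi
  · rw [coeff_X_mul]
    rw [coeff_eq_zero_of_degree_lt, mul_zero]
    refine lt_of_lt_of_le hp ?_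
    exact_mod_cast by exact_mod_cast Nat.lt_succ_iff.mp (by exact_mod_cast hi)

lemma coeff_add_C_mul (p q : Polynomial ℂ) (c : ℂ) (i : ℕ) :
    (p + C c * q).coeff i = p.coeff i + c * q.coeff i := by
  simp [coeff_add, coeff_C_mul]

lemma coeff_shift (p q : Polynomial ℂ) (c : ℂ) (i : ℕ) :
    (C c * X * p + q).coeff (i + 1) = c * p.coeff i + q.coeff (i + 1) := by
  rw [mul_assoc, coeff_add, coeff_C_mul, coeff_X_mul]

lemma step_e {M : Matrix (Fin 2) (Fin 2) (Polynomial ℂ)} {s : ℂ} {k : ℕ} (e₁ e₂ : ℂ)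
    (h : EInv M s k) :
    OInv ((!![1, C e₁; C e₂ * X, 1] : Matrix (Fin 2) (Fin 2) (Polynomial ℂ)) * M)
      (e₁ * e₂ * s) k := by
  obtain ⟨h00, h10, h11, h01, hc⟩ := h
  refine ⟨?_, ?_, ?_, ?_, ?_⟩
  · rw [entry00]; exact deg_add_C_mul h00 h10
  · rw [entry01]; exact deg_add_C_mul h01.le h11
  · rw [entry11]; exact deg_shift' h01 h11
  · rw [entry10]; exact deg_shift h00 (h10.trans (by exact_mod_cast Nat.le_succ k))
  · rw [entry01, entry10, coeff_add_C_mul, coeff_shift,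
      coeff_eq_zero_of_degree_lt h01,
      coeff_eq_zero_of_degree_lt (lt_cast_succ h10)]
    ring_nf
    rw [← hc]; ring

lemma step_o {M : Matrix (Fin 2) (Fin 2) (Polynomial ℂ)} {s : ℂ} {k : ℕ} (e₁ e₂ : ℂ)
    (h : OInv M s k) :
    EInv ((!![1, C e₁; C e₂ * X, 1] : Matrix (Fin 2) (Fin 2) (Polynomial ℂ)) * M)
      (e₁ * e₂ * s) (k + 1) := by
  obtain ⟨h00, h01, h11, h10, hc⟩ := h
  refine ⟨?_, ?_, ?_, ?_, ?_⟩
  · rw [entry00]; exact deg_add_C_mul (h00.trans (by exact_mod_cast Nat.le_succ k)) h10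
  · rw [entry10]; exact deg_shift h00 h10
  · rw [entry11]; exact deg_shift h01 (h11.trans (by exact_mod_cast Nat.le_succ k))
  · rw [entry01]; exact lt_cast_succ (deg_add_C_mul h01 h11)
  · rw [entry00, entry11, coeff_add_C_mul, coeff_shift,
      coeff_eq_zero_of_degree_lt (lt_cast_succ h00),
      coeff_eq_zero_of_degree_lt (lt_cast_succ h11)]
    rw [← hc]; ring

end LaxAux

namespace LaxAux

lemma neg_one_pow_two (m : ℕ) : (-1 : ℂ) * (-1 : ℂ) ^ (m + 1) = (-1) ^ m := by
  rw [pow_succ]; ring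

lemma deg_le_pred {p : Polynomial ℂ} {k : ℕ} (hk : 1 ≤ k) (h : p.degree < (k : ℕ)) :
    p.degree ≤ ((k - 1 : ℕ) : WithBot ℕ) := by
  rw [degree_le_iff_coeff_zero]
  intro i hi
  have hi' : k - 1 < i := by exact_mod_cast hi
  exact coeff_eq_zero_of_degree_lt (h.trans_le (by exact_mod_cast (by omega : k ≤ i)))

lemma key (u v : ℕ → ℂ) : ∀ n m : ℕ, (∀ i, i < n → u i ≠ 0) → (∀ i, i < m → v i ≠ 0) →
    (∀ k, n + m = 2 * k →
      EInv (UProdPoly u n * VProdPoly v m) ((-1 : ℂ) ^ m) k) ∧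
    (∀ k, n + m = 2 * k + 1 →
      OInv (UProdPoly u n * VProdPoly v m) ((-1 : ℂ) ^ (m + 1)) k) := by
  intro n
  induction n with
  | zero =>
    intro m
    induction m with
    | zero =>
      intro _ _
      constructor
      · intro k hk
        have hk0 : k = 0 := by omega
        subst hk0
        have h1 : UProdPoly u 0 * VProdPoly v 0 = 1 := by
          show (1 : Matrix (Fin 2) (Fin 2) (Polynomial ℂ)) * 1 = 1
          rw [one_mul]
        rw [h1]
        refine ⟨?_, ?_, ?_, ?_, ?_⟩
        · rw [Matrix.one_apply_eq, degree_one]; exact_mod_cast le_rfl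
        · rw [Matrix.one_apply_ne (by decide), degree_zero]; exact bot_le
        · rw [Matrix.one_apply_eq, degree_one]; exact_mod_cast le_rfl
        · rw [Matrix.one_apply_ne (by decide), degree_zero]
          exact WithBot.bot_lt_coe 0
        · rw [Matrix.one_apply_eq, Matrix.one_apply_eq, coeff_one_zero]; norm_num
      · intro k hk; omega
    | succ m ihm =>
      intro _ hv
      have hvm : v m ≠ 0 := hv m (by omega)
      have ihm' := ihm (by intro i hi; omega) (fun i hi => hv i (by omega))
      have hP : UProdPoly u 0 * VProdPoly v (m + 1)
          = VPoly (v m) * (UProdPoly u 0 * VProdPoly v m) := by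
        have h0 : UProdPoly u 0 = 1 := rfl
        have h1 : VProdPoly v (m + 1) = VPoly (v m) * VProdPoly v m := rfl
        rw [h0, h1, one_mul, one_mul]
      have hee : (-(v m)) * (-(v m)⁻¹) = 1 := by
        rw [neg_mul_neg, mul_inv_cancel₀ hvm]
      constructor
      · intro k hk
        rcases k with _ | k'
        · omega
        have hodd : 0 + m = 2 * k' + 1 := by omega
        have h := step_o (-(v m)) (-(v m)⁻¹) (ihm'.2 k' hodd)
        rw [hee, one_mul] at h
        rw [hP]
        exact h
      · intro k hk
        have heven : 0 + m = 2 * k := by omega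
        have h := step_e (-(v m)) (-(v m)⁻¹) (ihm'.1 k heven)
        rw [hee, one_mul] at h
        rw [hP]
        have hval : (-1 : ℂ) ^ (m + 1 + 1) = (-1) ^ m := by
          rw [pow_succ, pow_succ]; ring
        rw [hval]
        exact h
  | succ n ihn =>
    intro m hu hv
    have hun : u n ≠ 0 := hu n (by omega)
    have ihn' := ihn m (fun i hi => hu i (by omega)) hv
    have hP : UProdPoly u (n + 1) * VProdPoly v m
        = UPoly (u n) * (UProdPoly u n * VProdPoly v m) := by
      have h1 : UProdPoly u (n + 1) = UPoly (u n) * UProdPoly u n := rfl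
      rw [h1, mul_assoc]
    have hee : (-(u n)) * (u n)⁻¹ = -1 := by
      rw [neg_mul, mul_inv_cancel₀ hun]
    constructor
    · intro k hk
      rcases k with _ | k'
      · omega
      have hodd : n + m = 2 * k' + 1 := by omega
      have h := step_o (-(u n)) ((u n)⁻¹) (ihn'.2 k' hodd)
      rw [hee, neg_one_pow_two] at h
      rw [hP]
      exact h
    · intro k hk
      have heven : n + m = 2 * k := by omega
      have h := step_e (-(u n)) ((u n)⁻¹) (ihn'.1 k heven)
      rw [hee] at h
      have hval : (-1 : ℂ) * (-1 : ℂ) ^ m = (-1) ^ (m + 1) := by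
        rw [pow_succ]; ring
      rw [hval] at h
      rw [hP]
      exact h

end LaxAux


/-- Degree and leading-coefficient structure of the polynomial matrix
`P(λ) = U(λ; u_{n-1}) ⋯ U(λ; u_0) V(λ; v_{m-1}) ⋯ V(λ; v_0)`:
if `n + m = 2k` then the diagonal entries have degree `≤ k`, `P₂₁` has degree `≤ k`,
`P₁₂` has degree `≤ k - 1`, and the `λ^k`-coefficients of `P₁₁` and `P₂₂` multiply
to `(-1)^m`; if `n + m = 2k + 1` then `P₁₁, P₁₂, P₂₂` have degree `≤ k`, `P₂₁` has
degree `≤ k + 1`, and the `λ^k`-coefficient of `P₁₂` times the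
`λ^{k+1}`-coefficient of `P₂₁` equals `(-1)^{m+1}`. -/
theorem lax_product_degree_structure (n m : ℕ) (hnm : 1 ≤ n + m) (u v : ℕ → ℂ)
    (hu : ∀ k, k < n → u k ≠ 0) (hv : ∀ k, k < m → v k ≠ 0) :
    (∀ k : ℕ, n + m = 2 * k →
      ((UProdPoly u n * VProdPoly v m) 0 0).degree ≤ (k : ℕ) ∧
      ((UProdPoly u n * VProdPoly v m) 1 0).degree ≤ (k : ℕ) ∧
      ((UProdPoly u n * VProdPoly v m) 1 1).degree ≤ (k : ℕ) ∧
      ((UProdPoly u n * VProdPoly v m) 0 1).degree ≤ ((k - 1 : ℕ) : WithBot ℕ) ∧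
      ((UProdPoly u n * VProdPoly v m) 0 0).coeff k *
        ((UProdPoly u n * VProdPoly v m) 1 1).coeff k = (-1 : ℂ) ^ m) ∧
    (∀ k : ℕ, n + m = 2 * k + 1 →
      ((UProdPoly u n * VProdPoly v m) 0 0).degree ≤ (k : ℕ) ∧
      ((UProdPoly u n * VProdPoly v m) 0 1).degree ≤ (k : ℕ) ∧
      ((UProdPoly u n * VProdPoly v m) 1 1).degree ≤ (k : ℕ) ∧
      ((UProdPoly u n * VProdPoly v m) 1 0).degree ≤ ((k + 1 : ℕ) : WithBot ℕ) ∧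
      ((UProdPoly u n * VProdPoly v m) 0 1).coeff k *
        ((UProdPoly u n * VProdPoly v m) 1 0).coeff (k + 1) = (-1 : ℂ) ^ (m + 1)) := by
  obtain ⟨he, ho⟩ := LaxAux.key u v n m hu hv
  constructor
  · intro k hk
    obtain ⟨h00, h10, h11, h01, hc⟩ := he k hk
    exact ⟨h00, h10, h11, LaxAux.deg_le_pred (by omega) h01, hc⟩
  · intro k hk
    obtain ⟨h00, h01, h11, h10, hc⟩ := ho k hk
    exact ⟨h00, h01, h11, h10, hc⟩
end

section
/- Let λ ∈ ℂ and let w ∈ ℂ with w ≠ 0 and w² = λ. Set U = [[1, −1],[λ, 1]], V = [[1, −i],[iλ, 1]], and Q = [[1, 1],[iw, −iw]] (2×2 complex matrices). Then Q is invertible, U = Q·diag(1 − iw, 1 + iw)·Q⁻¹, V = Q·diag(1 + w, 1 − w)·Q⁻¹, and consequently for all n, m ∈ ℕ: Uⁿ·Vᵐ = Q·diag((1 − iw)ⁿ(1 + w)ᵐ, (1 + iw)ⁿ(1 − w)ᵐ)·Q⁻¹. -/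
/-- The diagonalizing matrix `Q = [[1, 1], [iw, -iw]]`. -/
noncomputable def Qmat (w : ℂ) : Matrix (Fin 2) (Fin 2) ℂ :=
  !![1, 1; Complex.I * w, -(Complex.I * w)]

lemma matConjPowAux {Q A : Matrix (Fin 2) (Fin 2) ℂ} (hQ : IsUnit Q)
    (n : ℕ) : (Q * A * Q⁻¹) ^ n = Q * A ^ n * Q⁻¹ := by
  induction n with
  | zero => simp [Matrix.mul_nonsing_inv _ (Matrix.isUnit_iff_isUnit_det _ |>.mp hQ)]
  | succ n ih =>
      rw [pow_succ, pow_succ, ih]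
      have h := Matrix.nonsing_inv_mul _ (Matrix.isUnit_iff_isUnit_det _ |>.mp hQ)
      rw [Matrix.mul_assoc (Q * A ^ n) Q⁻¹, ← Matrix.mul_assoc Q⁻¹ (Q * A), ← Matrix.mul_assoc Q⁻¹ Q, h]
      noncomm_ring

/-- Simultaneous diagonalization of the (commuting) Lax matrices
`U = [[1,-1],[λ,1]]` and `V = [[1,-i],[iλ,1]]` of the `a = 1` discrete power function,
where `w² = λ`, `w ≠ 0`; consequently
`UⁿVᵐ = Q·diag((1-iw)ⁿ(1+w)ᵐ, (1+iw)ⁿ(1-w)ᵐ)·Q⁻¹`. -/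
theorem lax_diagonalization_a_one (l w : ℂ) (hw : w ≠ 0) (hwl : w ^ 2 = l) :
    IsUnit (Qmat w) ∧
    (!![1, -1; l, 1] : Matrix (Fin 2) (Fin 2) ℂ) =
      Qmat w * Matrix.diagonal ![1 - Complex.I * w, 1 + Complex.I * w] * (Qmat w)⁻¹ ∧
    (!![1, -Complex.I; Complex.I * l, 1] : Matrix (Fin 2) (Fin 2) ℂ) =
      Qmat w * Matrix.diagonal ![1 + w, 1 - w] * (Qmat w)⁻¹ ∧
    ∀ n m : ℕ,
      (!![1, -1; l, 1] : Matrix (Fin 2) (Fin 2) ℂ) ^ n *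
          (!![1, -Complex.I; Complex.I * l, 1] : Matrix (Fin 2) (Fin 2) ℂ) ^ m =
        Qmat w *
          Matrix.diagonal ![(1 - Complex.I * w) ^ n * (1 + w) ^ m,
            (1 + Complex.I * w) ^ n * (1 - w) ^ m] * (Qmat w)⁻¹ := by
  have hdet : (Qmat w).det = -(2 * Complex.I * w) := by
    simp [Qmat, Matrix.det_fin_two_of]; ring
  have hdu : IsUnit (Qmat w).det := by
    rw [hdet, isUnit_iff_ne_zero]
    simp [Complex.I_ne_zero, hw]
  have hQ : IsUnit (Qmat w) := (Matrix.isUnit_iff_isUnit_det _).mpr hdu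
  have hQinv : Qmat w * (Qmat w)⁻¹ = 1 := Matrix.mul_nonsing_inv _ hdu
  have key : ∀ A : Matrix (Fin 2) (Fin 2) ℂ, ∀ D : Matrix (Fin 2) (Fin 2) ℂ,
      A * Qmat w = Qmat w * D → A = Qmat w * D * (Qmat w)⁻¹ := by
    intro A D h
    calc A = A * (Qmat w * (Qmat w)⁻¹) := by rw [hQinv, Matrix.mul_one]
    _ = (A * Qmat w) * (Qmat w)⁻¹ := by rw [Matrix.mul_assoc]
    _ = Qmat w * D * (Qmat w)⁻¹ := by rw [h]
  have hU : (!![1, -1; l, 1] : Matrix (Fin 2) (Fin 2) ℂ) =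
      Qmat w * Matrix.diagonal ![1 - Complex.I * w, 1 + Complex.I * w] * (Qmat w)⁻¹ := by
    apply key
    ext i j
    fin_cases i <;> fin_cases j <;>
      simp [Qmat, Matrix.mul_apply, Fin.sum_univ_two, ← hwl] <;> ring_nf <;>
      simp [Complex.I_sq] <;> ring
  have hV : (!![1, -Complex.I; Complex.I * l, 1] : Matrix (Fin 2) (Fin 2) ℂ) =
      Qmat w * Matrix.diagonal ![1 + w, 1 - w] * (Qmat w)⁻¹ := by
    apply key
    ext i j
    fin_cases i <;> fin_cases j <;>
      simp [Qmat, Matrix.mul_apply, Fin.sum_univ_two, ← hwl] <;> ring_nf <;>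
      simp [Complex.I_sq] <;> ring
  refine ⟨hQ, hU, hV, fun n m => ?_⟩
  rw [hU, hV, matConjPowAux hQ, matConjPowAux hQ, Matrix.diagonal_pow, Matrix.diagonal_pow]
  have hmid : Qmat w * Matrix.diagonal (![1 - Complex.I * w, 1 + Complex.I * w] ^ n) * (Qmat w)⁻¹ *
      (Qmat w * Matrix.diagonal (![1 + w, 1 - w] ^ m) * (Qmat w)⁻¹) =
      Qmat w * (Matrix.diagonal (![1 - Complex.I * w, 1 + Complex.I * w] ^ n) *
        Matrix.diagonal (![1 + w, 1 - w] ^ m)) * (Qmat w)⁻¹ := by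
    have h := Matrix.nonsing_inv_mul _ hdu
    calc Qmat w * Matrix.diagonal (![1 - Complex.I * w, 1 + Complex.I * w] ^ n) * (Qmat w)⁻¹ *
        (Qmat w * Matrix.diagonal (![1 + w, 1 - w] ^ m) * (Qmat w)⁻¹)
        = Qmat w * Matrix.diagonal (![1 - Complex.I * w, 1 + Complex.I * w] ^ n) * ((Qmat w)⁻¹ *
          Qmat w) * (Matrix.diagonal (![1 + w, 1 - w] ^ m) * (Qmat w)⁻¹) := by
          simp only [Matrix.mul_assoc]
    _ = _ := by rw [h]; simp only [Matrix.mul_assoc, Matrix.mul_one]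
  have hfun : (fun i => (![1 - Complex.I * w, 1 + Complex.I * w] ^ n) i * (![1 + w, 1 - w] ^ m) i) =
      ![(1 - Complex.I * w) ^ n * (1 + w) ^ m, (1 + Complex.I * w) ^ n * (1 - w) ^ m] := by
    funext i
    fin_cases i <;> simp [Pi.pow_apply]
  rw [hmid, Matrix.diagonal_mul_diagonal, hfun]
end

section
/- Let f : ℂ → ℂ, let z ∈ ℂ, and suppose f is complex-differentiable at z with f′(z) ≠ 0. Then, as the real parameter ε tends to 0 through nonzero values, the quantity (f(z) − f(z+ε))·(f(z+ε+iε) − f(z+iε)) / ((f(z+ε) − f(z+ε+iε))·(f(z+iε) − f(z))) is eventually defined (its denominator is nonzero for all sufficiently small nonzero real ε) and tends to −1. -/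
open Filter Complex

/-- For a map `f` complex-differentiable at `z` with nonvanishing derivative, the
cross-ratio of the images of the four vertices `z, z+ε, z+ε+iε, z+iε` of a small
square is eventually defined and tends to `-1` as the real parameter `ε → 0`,
`ε ≠ 0`. -/
theorem crossRatio_tendsto_neg_one (f : ℂ → ℂ) (z : ℂ) (d : ℂ)
    (hf : HasDerivAt f d z) (hd : d ≠ 0) :
    (∀ᶠ ε : ℝ in nhdsWithin 0 {x : ℝ | x ≠ 0},
      (f (z + (ε : ℂ)) - f (z + (ε : ℂ) + Complex.I * (ε : ℂ))) *
        (f (z + Complex.I * (ε : ℂ)) - f z) ≠ 0) ∧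
    Tendsto (fun ε : ℝ =>
        (f z - f (z + (ε : ℂ))) *
            (f (z + (ε : ℂ) + Complex.I * (ε : ℂ)) - f (z + Complex.I * (ε : ℂ))) /
          ((f (z + (ε : ℂ)) - f (z + (ε : ℂ) + Complex.I * (ε : ℂ))) *
            (f (z + Complex.I * (ε : ℂ)) - f z)))
      (nhdsWithin 0 {x : ℝ | x ≠ 0}) (nhds (-1)) := by
  set L : Filter ℝ := nhdsWithin 0 {x : ℝ | x ≠ 0} with hLdef
  have hne : ∀ᶠ ε : ℝ in L, ε ≠ 0 := self_mem_nhdsWithin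
  -- remainder quotient
  set q : ℂ → ℂ := fun w => (f (z + w) - f z - d * w) / w with hqdef
  have h1I : (1 + I : ℂ) ≠ 0 := by
    intro h
    have := congrArg Complex.re h
    simp at this
  have hIne : (I : ℂ) ≠ 0 := I_ne_zero
  have hq : Tendsto q (nhdsWithin (0 : ℂ) {w | w ≠ 0}) (nhds 0) := by
    have hs := hasDerivAt_iff_tendsto_slope.mp hf
    have hmap : Tendsto (fun w : ℂ => z + w) (nhdsWithin (0 : ℂ) {w | w ≠ 0})
        (nhdsWithin z {w | w ≠ z}) := by
      apply tendsto_nhdsWithin_of_tendsto_nhds_of_eventually_within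
      · have h0 : Tendsto (fun w : ℂ => z + w) (nhds 0) (nhds (z + 0)) :=
          (continuous_const.add continuous_id).tendsto (0 : ℂ)
        rw [add_zero] at h0
        exact h0.mono_left nhdsWithin_le_nhds
      · filter_upwards [self_mem_nhdsWithin] with w hw
        intro h
        exact hw (by simpa using h)
    have hcomp : Tendsto (fun w : ℂ => slope f z (z + w)) (nhdsWithin (0 : ℂ) {w | w ≠ 0})
        (nhds d) := by
      have : Tendsto (slope f z) (nhdsWithin z {w | w ≠ z}) (nhds d) := by
        simpa [Set.compl_def] using hs
      exact this.comp hmap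
    have hsub : Tendsto (fun w : ℂ => slope f z (z + w) - d)
        (nhdsWithin (0 : ℂ) {w | w ≠ 0}) (nhds (d - d)) := hcomp.sub tendsto_const_nhds
    rw [sub_self] at hsub
    refine hsub.congr' ?_
    filter_upwards [self_mem_nhdsWithin] with w hw
    rw [slope_def_field]
    simp only [hqdef, add_sub_cancel_left]
    simp only [sub_div, mul_div_assoc, div_self hw, mul_one]
  have hpath : ∀ k : ℂ, k ≠ 0 →
      Tendsto (fun ε : ℝ => (ε : ℂ) * k) L (nhdsWithin (0 : ℂ) {w | w ≠ 0}) := by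
    intro k hk
    apply tendsto_nhdsWithin_of_tendsto_nhds_of_eventually_within
    · have hc : Continuous (fun ε : ℝ => (ε : ℂ) * k) :=
        Complex.continuous_ofReal.mul continuous_const
      have := hc.tendsto 0
      rw [Complex.ofReal_zero, zero_mul] at this
      exact this.mono_left nhdsWithin_le_nhds
    · filter_upwards [self_mem_nhdsWithin] with ε hε
      exact mul_ne_zero (by exact_mod_cast hε) hk
  -- difference-quotient-like functions
  set A : ℝ → ℂ := fun ε => -(d + q ((ε : ℂ))) with hAdef
  set B : ℝ → ℂ := fun ε => d + q ((ε : ℂ) * (1 + I)) * (1 + I) - q ((ε : ℂ) * I) * I with hBdef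
  set C : ℝ → ℂ := fun ε => -(d * I) + q ((ε : ℂ)) - q ((ε : ℂ) * (1 + I)) * (1 + I) with hCdef
  set E : ℝ → ℂ := fun ε => d * I + q ((ε : ℂ) * I) * I with hEdef
  have hq1 : Tendsto (fun ε : ℝ => q ((ε : ℂ))) L (nhds 0) := by
    have := hq.comp (hpath 1 one_ne_zero)
    simpa [Function.comp_def] using this
  have hq2 : Tendsto (fun ε : ℝ => q ((ε : ℂ) * (1 + I))) L (nhds 0) :=
    hq.comp (hpath (1 + I) h1I)
  have hq3 : Tendsto (fun ε : ℝ => q ((ε : ℂ) * I)) L (nhds 0) :=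
    hq.comp (hpath I hIne)
  have hA : Tendsto A L (nhds (-d)) := by
    have h := ((tendsto_const_nhds (x := d) (f := L)).add hq1).neg
    rw [add_zero] at h
    exact h
  have hB : Tendsto B L (nhds d) := by
    have h := ((tendsto_const_nhds (x := d) (f := L)).add
      (hq2.mul (tendsto_const_nhds (x := 1 + I)))).sub (hq3.mul (tendsto_const_nhds (x := I)))
    rw [zero_mul, zero_mul, add_zero, sub_zero] at h
    exact h
  have hC : Tendsto C L (nhds (-(d * I))) := by
    have h := ((tendsto_const_nhds (x := -(d * I)) (f := L)).add hq1).sub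
      (hq2.mul (tendsto_const_nhds (x := 1 + I)))
    rw [zero_mul, add_zero, sub_zero] at h
    exact h
  have hE : Tendsto E L (nhds (d * I)) := by
    have h := (tendsto_const_nhds (x := d * I) (f := L)).add
      (hq3.mul (tendsto_const_nhds (x := I)))
    rw [zero_mul, add_zero] at h
    exact h
  have key : ∀ w : ℂ, w ≠ 0 → f (z + w) = f z + d * w + q w * w := by
    intro w hw
    simp only [hqdef, div_mul_cancel₀ _ hw]
    ring
  have hfac : ∀ᶠ ε : ℝ in L,
      (f z - f (z + (ε : ℂ))) = A ε * ε ∧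
      (f (z + (ε : ℂ) + Complex.I * (ε : ℂ)) - f (z + Complex.I * (ε : ℂ))) = B ε * ε ∧
      (f (z + (ε : ℂ)) - f (z + (ε : ℂ) + Complex.I * (ε : ℂ))) = C ε * ε ∧
      (f (z + Complex.I * (ε : ℂ)) - f z) = E ε * ε := by
    filter_upwards [hne] with ε hε
    have hε' : (ε : ℂ) ≠ 0 := by exact_mod_cast hε
    have e2 : z + (ε : ℂ) + Complex.I * (ε : ℂ) = z + (ε : ℂ) * (1 + I) := by ring
    have e3 : z + Complex.I * (ε : ℂ) = z + (ε : ℂ) * I := by ring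
    have h1 := key (ε : ℂ) hε'
    have h2 := key ((ε : ℂ) * (1 + I)) (mul_ne_zero hε' h1I)
    have h3 := key ((ε : ℂ) * I) (mul_ne_zero hε' hIne)
    rw [e2, e3]
    refine ⟨?_, ?_, ?_, ?_⟩ <;>
      simp only [h1, h2, h3, hAdef, hBdef, hCdef, hEdef] <;> ring
  have hCE : Tendsto (fun ε : ℝ => C ε * E ε) L (nhds (-(d * I) * (d * I))) := hC.mul hE
  have hCEne0 : -(d * I) * (d * I) ≠ 0 :=
    mul_ne_zero (neg_ne_zero.mpr (mul_ne_zero hd hIne)) (mul_ne_zero hd hIne)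
  have hCEev : ∀ᶠ ε : ℝ in L, C ε * E ε ≠ 0 := hCE.eventually_ne hCEne0
  constructor
  · filter_upwards [hne, hfac, hCEev] with ε hε hf4 hce
    have hε' : (ε : ℂ) ≠ 0 := by exact_mod_cast hε
    rw [hf4.2.2.1, hf4.2.2.2]
    have : C ε * (ε : ℂ) * (E ε * (ε : ℂ)) = C ε * E ε * ((ε : ℂ) * (ε : ℂ)) := by ring
    rw [this]
    exact mul_ne_zero hce (mul_ne_zero hε' hε')
  · have hlim : Tendsto (fun ε : ℝ => (A ε * B ε) / (C ε * E ε)) L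
        (nhds ((-d * d) / (-(d * I) * (d * I)))) := (hA.mul hB).div hCE hCEne0
    have hval : (-d * d) / (-(d * I) * (d * I)) = -1 := by
      have hII : (I : ℂ) * I = -1 := I_mul_I
      rw [div_eq_iff hCEne0]
      linear_combination (-(d * d)) * hII
    rw [hval] at hlim
    refine Tendsto.congr' ?_ hlim
    filter_upwards [hne, hfac] with ε hε hf4
    have hε' : (ε : ℂ) ≠ 0 := by exact_mod_cast hε
    rw [hf4.1, hf4.2.1, hf4.2.2.1, hf4.2.2.2]
    rw [show A ε * (ε : ℂ) * (B ε * (ε : ℂ)) = A ε * B ε * ((ε : ℂ) * (ε : ℂ)) by ring,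
        show C ε * (ε : ℂ) * (E ε * (ε : ℂ)) = C ε * E ε * ((ε : ℂ) * (ε : ℂ)) by ring,
        mul_div_mul_right _ _ (mul_ne_zero hε' hε')]
end

section
/- Let f : ℂ → ℂ, let z = x + i·y with x, y ∈ ℝ, and suppose f is complex-differentiable at z with f′(z) ≠ 0. Then, as the real parameter ε tends to 0 through nonzero values, the quantity 2·(x/ε)·(f(z+ε) − f(z))·(f(z) − f(z−ε))/(f(z+ε) − f(z−ε)) + 2·(y/ε)·(f(z+iε) − f(z))·(f(z) − f(z−iε))/(f(z+iε) − f(z−iε)) is eventually defined (both denominators are nonzero for all sufficiently small nonzero real ε) and tends to z·f′(z). -/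
open Filter

private lemma slope_lim (f : ℂ → ℂ) (z d : ℂ) (hf : HasDerivAt f d z) (c : ℂ) (hc : c ≠ 0) :
    Tendsto (fun ε : ℝ => (f (z + c * ε) - f z) / ε)
      (nhdsWithin 0 {t : ℝ | t ≠ 0}) (nhds (c * d)) := by
  have hslope : Tendsto (slope f z) (nhdsWithin z {z}ᶜ) (nhds d) :=
    hasDerivAt_iff_tendsto_slope.mp hf
  have hmap : Tendsto (fun ε : ℝ => z + c * ε) (nhdsWithin 0 {t : ℝ | t ≠ 0})
      (nhdsWithin z {z}ᶜ) := by
    apply tendsto_nhdsWithin_of_tendsto_nhds_of_eventually_within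
    · have : Tendsto (fun ε : ℝ => z + c * ε) (nhds 0) (nhds z) := by
        have h : Continuous (fun ε : ℝ => z + c * ε) :=
          continuous_const.add (continuous_const.mul Complex.continuous_ofReal)
        simpa using h.tendsto 0
      exact this.mono_left nhdsWithin_le_nhds
    · filter_upwards [self_mem_nhdsWithin] with ε (hε : ε ≠ 0)
      simp only [Set.mem_compl_iff, Set.mem_singleton_iff]
      intro h
      apply hε
      have : c * (ε : ℂ) = 0 := by linear_combination h
      exact_mod_cast (mul_eq_zero.mp this).resolve_left hc
  have h1 : Tendsto (fun ε : ℝ => c * slope f z (z + c * ε))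
      (nhdsWithin 0 {t : ℝ | t ≠ 0}) (nhds (c * d)) :=
    (hslope.comp hmap).const_mul c
  refine h1.congr' ?_
  filter_upwards [self_mem_nhdsWithin] with ε (hε : ε ≠ 0)
  have hε' : (ε : ℂ) ≠ 0 := Complex.ofReal_ne_zero.mpr hε
  simp only [slope_def_field, Function.comp]
  field_simp
  ring

/-- The continuous limit of the right-hand side of the nonautonomous constraint:
for `f` complex-differentiable at `z = x + iy` with `f'(z) ≠ 0`, the quantity
`2(x/ε)(f(z+ε)-f(z))(f(z)-f(z-ε))/(f(z+ε)-f(z-ε)) +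
 2(y/ε)(f(z+iε)-f(z))(f(z)-f(z-iε))/(f(z+iε)-f(z-iε))`
is eventually defined and tends to `z·f'(z)` as the real parameter `ε → 0`, `ε ≠ 0`. -/
theorem constraint_continuous_limit (f : ℂ → ℂ) (x y : ℝ) (z : ℂ)
    (hz : z = (x : ℂ) + Complex.I * (y : ℂ)) (d : ℂ)
    (hf : HasDerivAt f d z) (hd : d ≠ 0) :
    (∀ᶠ ε : ℝ in nhdsWithin 0 {t : ℝ | t ≠ 0},
      f (z + (ε : ℂ)) - f (z - (ε : ℂ)) ≠ 0 ∧
      f (z + Complex.I * (ε : ℂ)) - f (z - Complex.I * (ε : ℂ)) ≠ 0) ∧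
    Tendsto (fun ε : ℝ =>
        2 * ((x : ℂ) / (ε : ℂ)) *
            ((f (z + (ε : ℂ)) - f z) * (f z - f (z - (ε : ℂ)))) /
            (f (z + (ε : ℂ)) - f (z - (ε : ℂ))) +
          2 * ((y : ℂ) / (ε : ℂ)) *
            ((f (z + Complex.I * (ε : ℂ)) - f z) * (f z - f (z - Complex.I * (ε : ℂ)))) /
            (f (z + Complex.I * (ε : ℂ)) - f (z - Complex.I * (ε : ℂ))))
      (nhdsWithin 0 {t : ℝ | t ≠ 0}) (nhds (z * d)) := by
  have hI : (Complex.I : ℂ) ≠ 0 := Complex.I_ne_zero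
  -- the four difference quotients
  have hA : Tendsto (fun ε : ℝ => (f (z + (ε : ℂ)) - f z) / ε)
      (nhdsWithin 0 {t : ℝ | t ≠ 0}) (nhds d) := by
    have := slope_lim f z d hf 1 one_ne_zero
    simpa using this
  have hB : Tendsto (fun ε : ℝ => (f z - f (z - (ε : ℂ))) / ε)
      (nhdsWithin 0 {t : ℝ | t ≠ 0}) (nhds d) := by
    have h0 := (slope_lim f z d hf (-1) (by norm_num)).neg
    rw [show (-(-1*d) : ℂ) = d by ring] at h0
    refine h0.congr fun ε => ?_
    rw [show z + (-1:ℂ) * ε = z - ε by ring, ← neg_div, neg_sub]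
  have hA' : Tendsto (fun ε : ℝ => (f (z + Complex.I * (ε : ℂ)) - f z) / ε)
      (nhdsWithin 0 {t : ℝ | t ≠ 0}) (nhds (Complex.I * d)) :=
    slope_lim f z d hf Complex.I hI
  have hB' : Tendsto (fun ε : ℝ => (f z - f (z - Complex.I * (ε : ℂ))) / ε)
      (nhdsWithin 0 {t : ℝ | t ≠ 0}) (nhds (Complex.I * d)) := by
    have h0 := (slope_lim f z d hf (-Complex.I) (neg_ne_zero.mpr hI)).neg
    rw [show (-(-Complex.I*d) : ℂ) = Complex.I * d by ring] at h0
    refine h0.congr fun ε => ?_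
    rw [show z + (-Complex.I) * ε = z - Complex.I * ε by ring, ← neg_div, neg_sub]
  have hS : Tendsto (fun ε : ℝ => (f (z + (ε : ℂ)) - f (z - (ε : ℂ))) / ε)
      (nhdsWithin 0 {t : ℝ | t ≠ 0}) (nhds (d + d)) := by
    refine (hA.add hB).congr fun ε => ?_
    rw [← add_div]; ring_nf
  have hS' : Tendsto (fun ε : ℝ =>
        (f (z + Complex.I * (ε : ℂ)) - f (z - Complex.I * (ε : ℂ))) / ε)
      (nhdsWithin 0 {t : ℝ | t ≠ 0}) (nhds (Complex.I * d + Complex.I * d)) := by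
    refine (hA'.add hB').congr fun ε => ?_
    rw [← add_div]; ring_nf
  have hdd : d + d ≠ 0 := by
    intro h; apply hd; linear_combination h / 2
  have hdd' : Complex.I * d + Complex.I * d ≠ 0 := by
    rw [← two_mul]
    exact mul_ne_zero two_ne_zero (mul_ne_zero hI hd)
  have hne1 : ∀ᶠ ε : ℝ in nhdsWithin 0 {t : ℝ | t ≠ 0},
      f (z + (ε : ℂ)) - f (z - (ε : ℂ)) ≠ 0 := by
    filter_upwards [hS.eventually_ne hdd] with ε h h0
    exact h (by rw [h0, zero_div])
  have hne2 : ∀ᶠ ε : ℝ in nhdsWithin 0 {t : ℝ | t ≠ 0},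
      f (z + Complex.I * (ε : ℂ)) - f (z - Complex.I * (ε : ℂ)) ≠ 0 := by
    filter_upwards [hS'.eventually_ne hdd'] with ε h h0
    exact h (by rw [h0, zero_div])
  refine ⟨hne1.and hne2, ?_⟩
  have hlim : Tendsto (fun ε : ℝ =>
      2 * (x : ℂ) * (((f (z + (ε : ℂ)) - f z) / ε) * ((f z - f (z - (ε : ℂ))) / ε)) /
        ((f (z + (ε : ℂ)) - f (z - (ε : ℂ))) / ε) +
      2 * (y : ℂ) * (((f (z + Complex.I * (ε : ℂ)) - f z) / ε) *
          ((f z - f (z - Complex.I * (ε : ℂ))) / ε)) /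
        ((f (z + Complex.I * (ε : ℂ)) - f (z - Complex.I * (ε : ℂ))) / ε))
      (nhdsWithin 0 {t : ℝ | t ≠ 0})
      (nhds (2 * (x : ℂ) * (d * d) / (d + d) +
        2 * (y : ℂ) * ((Complex.I * d) * (Complex.I * d)) / (Complex.I * d + Complex.I * d))) := by
    exact (((tendsto_const_nhds.mul (hA.mul hB)).div hS hdd).add
      ((tendsto_const_nhds.mul (hA'.mul hB')).div hS' hdd'))
  have hval : 2 * (x : ℂ) * (d * d) / (d + d) +
      2 * (y : ℂ) * ((Complex.I * d) * (Complex.I * d)) / (Complex.I * d + Complex.I * d)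
      = z * d := by
    rw [hz]
    field_simp
    ring
  rw [← hval]
  refine hlim.congr' ?_
  filter_upwards [self_mem_nhdsWithin, hne1, hne2] with ε (hε : ε ≠ 0) h1 h2
  have hε' : (ε : ℂ) ≠ 0 := Complex.ofReal_ne_zero.mpr hε
  field_simp
end
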